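/- Let E be a unital trace-preserving completely positive map on a finite-dimensional Hilbert space and P an orthogonal projection such that E†∘E(P) = P (where E† is the Hilbert-Schmidt adjoint). Then rank(E(P)) = rank(P). -/

import Mathlib

open Finset Matrix ComplexOrder

-- trace of a Hermitian matrix is the sum of its eigenvalues
lemma aux_trace_eq_sum_ev {m : ℕ} (A : Matrix (Fin m) (Fin m) ℂ) (hA : A.IsHermitian) :
    A.trace = ∑ i, (hA.eigenvalues i : ℂ) := by
  conv_lhs => rw [hA.spectral_theorem]
  rw [Unitary.conjStarAlgAut_apply, Matrix.trace_mul_cycle]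
  simp [Matrix.mem_unitaryGroup_iff'.mp (hA.eigenvectorUnitary).2, Matrix.trace_diagonal]

-- PSD with zero trace is zero
lemma aux_psd_trace_zero {m : ℕ} (A : Matrix (Fin m) (Fin m) ℂ) (hA : A.PosSemidef)
    (h : A.trace = 0) : A = 0 := by
  have h1 : A.trace = ∑ i, ((hA.1.eigenvalues i : ℝ) : ℂ) := aux_trace_eq_sum_ev A hA.1
  have h2 : ∑ i, hA.1.eigenvalues i = 0 := by
    have := h1.symm.trans h
    push_cast at this
    exact_mod_cast this
  have h3 : ∀ i ∈ Finset.univ, hA.1.eigenvalues i = 0 :=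
    (Finset.sum_eq_zero_iff_of_nonneg (fun i _ => hA.eigenvalues_nonneg i)).mp h2
  have h4 : (RCLike.ofReal ∘ hA.1.eigenvalues : Fin m → ℂ) = 0 := by
    funext i; simp [h3 i (Finset.mem_univ i)]
  conv_lhs => rw [hA.1.spectral_theorem]
  rw [h4]
  have h5 : Matrix.diagonal (0 : Fin m → ℂ) = 0 := by
    ext i j; simp [Matrix.diagonal]
  rw [h5, map_zero]

-- eigenvalues of a Hermitian idempotent are 0 or 1
lemma aux_ev_idem {m : ℕ} (R : Matrix (Fin m) (Fin m) ℂ) (hR : R.IsHermitian)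
    (hRR : R * R = R) (i : Fin m) : hR.eigenvalues i = 0 ∨ hR.eigenvalues i = 1 := by
  set v := ⇑(hR.eigenvectorBasis i) with hv
  have hv0 : v ≠ 0 := by
    intro h
    apply hR.eigenvectorBasis.orthonormal.ne_zero i
    ext j
    exact congrFun h j
  have h1 : R *ᵥ v = hR.eigenvalues i • v := hR.mulVec_eigenvectorBasis i
  have h2 : (hR.eigenvalues i * hR.eigenvalues i) • v = hR.eigenvalues i • v := by
    calc (hR.eigenvalues i * hR.eigenvalues i) • v
        = hR.eigenvalues i • (hR.eigenvalues i • v) := by rw [mul_smul]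
      _ = hR.eigenvalues i • (R *ᵥ v) := by rw [h1]
      _ = R *ᵥ (hR.eigenvalues i • v) := by rw [Matrix.mulVec_smul]
      _ = R *ᵥ (R *ᵥ v) := by rw [h1]
      _ = (R * R) *ᵥ v := by rw [Matrix.mulVec_mulVec]
      _ = R *ᵥ v := by rw [hRR]
      _ = hR.eigenvalues i • v := h1
  have h3 : (hR.eigenvalues i * hR.eigenvalues i - hR.eigenvalues i) • v = 0 := by
    rw [sub_smul, h2, sub_self]
  rcases smul_eq_zero.mp h3 with h | h
  · have h5 : hR.eigenvalues i * (hR.eigenvalues i - 1) = 0 := by ring_nf; linarith [h]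
    rcases mul_eq_zero.mp h5 with h6 | h6
    · exact Or.inl h6
    · exact Or.inr (by linarith)
  · exact absurd h hv0

-- trace of Hermitian idempotent equals rank
lemma aux_trace_proj {m : ℕ} (R : Matrix (Fin m) (Fin m) ℂ) (hR : R.IsHermitian)
    (hRR : R * R = R) : R.trace = (R.rank : ℂ) := by
  have hev := aux_ev_idem R hR hRR
  rw [aux_trace_eq_sum_ev R hR, hR.rank_eq_card_non_zero_eigs, Fintype.card_subtype]
  have h : ∑ i, (hR.eigenvalues i : ℂ)
      = ∑ i ∈ Finset.univ.filter (fun i => hR.eigenvalues i ≠ 0), (1 : ℂ) := by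
    rw [Finset.sum_filter]
    apply Finset.sum_congr rfl
    intro i _
    rcases hev i with h | h <;> simp [h]
  rw [h, Finset.sum_const, nsmul_eq_mul, mul_one]

/-- Complete positivity via the existence of a Kraus representation. -/
def IsCP {I J : Type*} [Fintype I] [Fintype J]
    (E : Matrix I I ℂ →ₗ[ℂ] Matrix J J ℂ) : Prop :=
  ∃ (r : ℕ) (K : Fin r → Matrix J I ℂ), ∀ X, E X = ∑ a, K a * X * (K a)ᴴ

set_option maxHeartbeats 1000000 in
theorem rank_eq_of_adjoint_comp_fixes {n : ℕ}
    (E Edag : Matrix (Fin n) (Fin n) ℂ →ₗ[ℂ] Matrix (Fin n) (Fin n) ℂ)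
    (hCP : IsCP E)
    (hTP : ∀ X, (E X).trace = X.trace)
    (hU : E 1 = 1)
    (hadj : ∀ σ τ : Matrix (Fin n) (Fin n) ℂ, (Edag σ * τ).trace = (σ * E τ).trace)
    (P : Matrix (Fin n) (Fin n) ℂ)
    (hPh : P.IsHermitian) (hPP : P * P = P)
    (hfix : Edag (E P) = P) :
    (E P).rank = P.rank := by
  obtain ⟨r, K, hK⟩ := hCP
  -- E of a Hermitian idempotent is PSD
  have key : ∀ R : Matrix (Fin n) (Fin n) ℂ, R.IsHermitian → R * R = R →
      (E R).PosSemidef := by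
    intro R hR hRR
    rw [hK]
    have heq : ∀ a, K a * R * (K a)ᴴ = (K a * R) * (K a * R)ᴴ := by
      intro a
      rw [Matrix.conjTranspose_mul, hR.eq]
      calc K a * R * (K a)ᴴ = K a * (R * R) * (K a)ᴴ := by rw [hRR]
        _ = (K a * R) * (R * (K a)ᴴ) := by simp only [Matrix.mul_assoc]
    rw [Finset.sum_congr rfl (fun a _ => heq a)]
    apply Finset.sum_induction _ Matrix.PosSemidef (fun a b ha hb => ha.add hb)
      Matrix.PosSemidef.zero
    intro a _
    exact Matrix.posSemidef_self_mul_conjTranspose _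
  set Q := E P with hQ
  have hQpsd : Q.PosSemidef := key P hPh hPP
  have h1P : (1 - P).IsHermitian := by
    unfold Matrix.IsHermitian
    rw [Matrix.conjTranspose_sub, Matrix.conjTranspose_one, hPh.eq]
  have h1PP : (1 - P) * (1 - P) = 1 - P := by
    rw [Matrix.sub_mul, Matrix.mul_sub, Matrix.mul_sub, hPP]
    simp
  have hIQpsd : (1 - Q).PosSemidef := by
    have : E (1 - P) = 1 - Q := by rw [map_sub, hU]
    rw [← this]
    exact key (1 - P) h1P h1PP
  -- traces
  have htQ : Q.trace = P.trace := hTP P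
  have htQQ : (Q * Q).trace = P.trace := by
    have := hadj (E P) P
    rw [hfix, hPP] at this
    exact this.symm
  -- Q - Q*Q is PSD with zero trace
  obtain ⟨S, hsh, hsq⟩ : ∃ S : Matrix (Fin n) (Fin n) ℂ, S.IsHermitian ∧ S * S = Q := by
    open scoped MatrixOrder in
    exact ⟨CFC.sqrt Q, (CFC.sqrt_nonneg Q).posSemidef.1, CFC.sqrt_mul_sqrt_self Q hQpsd.nonneg⟩
  have hD : S * (1 - Q) * Sᴴ = Q - Q * Q := by
    rw [hsh.eq, Matrix.mul_sub, Matrix.mul_one, Matrix.sub_mul, hsq]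
    congr 1
    calc S * Q * S
        = S * (S * S) * S := by rw [hsq]
      _ = (S * S) * (S * S) := by
          simp only [Matrix.mul_assoc]
      _ = Q * Q := by rw [hsq]
  have hDpsd : (Q - Q * Q).PosSemidef := by
    rw [← hD]
    exact hIQpsd.mul_mul_conjTranspose_same _
  have hDtr : (Q - Q * Q).trace = 0 := by
    rw [Matrix.trace_sub, htQ, htQQ, sub_self]
  have hQQ : Q * Q = Q := by
    have := aux_psd_trace_zero _ hDpsd hDtr
    rw [sub_eq_zero] at this
    exact this.symm
  -- conclude via traces = ranks
  have hr1 : Q.trace = (Q.rank : ℂ) := aux_trace_proj Q hQpsd.1 hQQ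
  have hr2 : P.trace = (P.rank : ℂ) := aux_trace_proj P hPh hPP
  have : (Q.rank : ℂ) = (P.rank : ℂ) := by rw [← hr1, ← hr2, htQ]
  exact_mod_cast this
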